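/- For each (α,β,γ,δ) ∈ ℝ⁴, the map T(α,β,γ,δ)(x¹,x²) = (e^α x¹ + β e^{cx²}cos(x²) + γ e^{cx²}sin(x²), x² + δ) is an affine diffeomorphism of M(c), i.e., it preserves the connection with Christoffel symbols Γ₂₂¹=(1+c²)x¹, Γ₂₂²=2c. -/

import Mathlib

noncomputable def e : Fin 2 → ℝ × ℝ
  | 0 => (1, 0)
  | 1 => (0, 1)

noncomputable def pd (i : Fin 2) (f : ℝ × ℝ → ℝ) (p : ℝ × ℝ) : ℝ :=
  fderiv ℝ f p (e i)

/-- Christoffel symbols of `M(c)`. -/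
noncomputable def Γ (c : ℝ) (i j k : Fin 2) (p : ℝ × ℝ) : ℝ :=
  if i = 1 ∧ j = 1 then (if k = 0 then (1 + c ^ 2) * p.1 else 2 * c) else 0

/-- The map `T(α,β,γ,δ)`. -/
noncomputable def T (c α β γ δ : ℝ) : ℝ × ℝ → ℝ × ℝ := fun p =>
  (Real.exp α * p.1 + β * Real.exp (c * p.2) * Real.cos p.2
      + γ * Real.exp (c * p.2) * Real.sin p.2,
    p.2 + δ)

/-- Components of `T(α,β,γ,δ)`. -/
noncomputable def Tc (c α β γ δ : ℝ) : Fin 2 → ℝ × ℝ → ℝ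
  | 0 => fun p => (T c α β γ δ p).1
  | 1 => fun p => (T c α β γ δ p).2

/-- A map `F` with components `Fc` is affine for the connection with Christoffel
symbols `Γ₁` (target `Γ₂`) iff
`Σ_m Γ₁ᵐ_{ab}(p)·∂_mFᵏ = Σ_{ij} Γ₂ᵏ_{ij}(Fp)·∂_aFⁱ·∂_bFʲ + ∂_a∂_bFᵏ`. -/
def Intertwines (Γ₁ Γ₂ : Fin 2 → Fin 2 → Fin 2 → ℝ × ℝ → ℝ)
    (F : ℝ × ℝ → ℝ × ℝ) (Fc : Fin 2 → ℝ × ℝ → ℝ) : Prop :=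
  ∀ a b k : Fin 2, ∀ p : ℝ × ℝ,
    ∑ m : Fin 2, Γ₁ a b m p * pd m (Fc k) p =
      (∑ i : Fin 2, ∑ j : Fin 2, Γ₂ i j k (F p) * pd a (Fc i) p * pd b (Fc j) p)
        + pd a (fun q => pd b (Fc k) q) p

noncomputable def E (c a b : ℝ) : ℝ → ℝ :=
  fun y => Real.exp (c * y) * (a * Real.cos y + b * Real.sin y)

lemma hasDerivAt_E (c a b y : ℝ) :
    HasDerivAt (E c a b) (E c (a * c + b) (b * c - a) y) y := by
  have hexp : HasDerivAt (fun y : ℝ => Real.exp (c * y)) (Real.exp (c * y) * c) y := by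
    simpa using ((hasDerivAt_id y).const_mul c).exp
  have htrig : HasDerivAt (fun y : ℝ => a * Real.cos y + b * Real.sin y)
      (a * (-Real.sin y) + b * Real.cos y) y :=
    ((Real.hasDerivAt_cos y).const_mul a).add ((Real.hasDerivAt_sin y).const_mul b)
  have := hexp.mul htrig
  convert this using 1
  · rfl
  · rfl
  · rfl
  · unfold E; ring

lemma key (p : ℝ × ℝ) (k : ℝ) (g : ℝ → ℝ) (g' : ℝ) (hg : HasDerivAt g g' p.2) :
    HasFDerivAt (fun q : ℝ × ℝ => k * q.1 + g q.2)
      (k • ContinuousLinearMap.fst ℝ ℝ ℝ + g' • ContinuousLinearMap.snd ℝ ℝ ℝ) p :=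
  ((hasFDerivAt_fst).const_mul k).add (hg.comp_hasFDerivAt p hasFDerivAt_snd)

lemma pd0_key (p : ℝ × ℝ) (k : ℝ) (g : ℝ → ℝ) (g' : ℝ) (hg : HasDerivAt g g' p.2) :
    pd 0 (fun q : ℝ × ℝ => k * q.1 + g q.2) p = k := by
  rw [pd, (key p k g g' hg).fderiv]
  simp [e]

lemma pd1_key (p : ℝ × ℝ) (k : ℝ) (g : ℝ → ℝ) (g' : ℝ) (hg : HasDerivAt g g' p.2) :
    pd 1 (fun q : ℝ × ℝ => k * q.1 + g q.2) p = g' := by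
  rw [pd, (key p k g g' hg).fderiv]
  simp [e]

section pdlemmas

variable (c α β γ δ : ℝ) (p : ℝ × ℝ)

lemma Tc0_eq : Tc c α β γ δ 0 = fun q : ℝ × ℝ => Real.exp α * q.1 + E c β γ q.2 := by
  funext q; simp [Tc, T, E]; ring

lemma Tc1_eq : Tc c α β γ δ 1 = fun q : ℝ × ℝ => (0:ℝ) * q.1 + (q.2 + δ) := by
  funext q; simp [Tc, T]

lemma pd0_Tc0 : pd 0 (Tc c α β γ δ 0) p = Real.exp α := by
  rw [Tc0_eq]
  exact pd0_key p _ _ _ (hasDerivAt_E c β γ p.2)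

lemma pd1_Tc0 : pd 1 (Tc c α β γ δ 0) p = E c (β * c + γ) (γ * c - β) p.2 := by
  rw [Tc0_eq]
  exact pd1_key p _ _ _ (hasDerivAt_E c β γ p.2)

lemma pd0_Tc1 : pd 0 (Tc c α β γ δ 1) p = 0 := by
  rw [Tc1_eq]
  exact pd0_key p _ _ _ ((hasDerivAt_id p.2).add_const δ)

lemma pd1_Tc1 : pd 1 (Tc c α β γ δ 1) p = 1 := by
  rw [Tc1_eq]
  exact pd1_key p _ _ _ ((hasDerivAt_id p.2).add_const δ)

lemma pd_const (i : Fin 2) (r : ℝ) : pd i (fun _ : ℝ × ℝ => r) p = 0 := by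
  rw [pd, fderiv_fun_const]
  simp

lemma pd0_E (a b : ℝ) : pd 0 (fun q : ℝ × ℝ => E c a b q.2) p = 0 := by
  have : (fun q : ℝ × ℝ => E c a b q.2)
      = fun q : ℝ × ℝ => (0:ℝ) * q.1 + E c a b q.2 := by funext q; ring
  rw [this]
  exact pd0_key p _ _ _ (hasDerivAt_E c a b p.2)

lemma pd1_E (a b : ℝ) : pd 1 (fun q : ℝ × ℝ => E c a b q.2) p
    = E c (a * c + b) (b * c - a) p.2 := by
  have : (fun q : ℝ × ℝ => E c a b q.2)
      = fun q : ℝ × ℝ => (0:ℝ) * q.1 + E c a b q.2 := by funext q; ring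
  rw [this]
  exact pd1_key p _ _ _ (hasDerivAt_E c a b p.2)

end pdlemmas

/-- each `T(α,β,γ,δ)` is an affine diffeomorphism of `M(c)`. -/
theorem T_affine_diffeo (c α β γ δ : ℝ) :
    Function.Bijective (T c α β γ δ) ∧
    Intertwines (Γ c) (Γ c) (T c α β γ δ) (Tc c α β γ δ) := by
  constructor
  · apply Function.bijective_iff_has_inverse.mpr
    refine ⟨fun p => ((p.1 - β * Real.exp (c * (p.2 - δ)) * Real.cos (p.2 - δ)
        - γ * Real.exp (c * (p.2 - δ)) * Real.sin (p.2 - δ)) / Real.exp α, p.2 - δ), ?_, ?_⟩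
    · intro p
      have h2 : p.2 + δ - δ = p.2 := by ring
      simp only [T, h2]
      refine Prod.ext ?_ rfl
      field_simp
      ring
    · intro p
      have h2 : p.2 - δ + δ = p.2 := by ring
      simp only [T, h2]
      refine Prod.ext ?_ rfl
      field_simp
      ring
  · intro a b k p
    fin_cases a <;> fin_cases b <;> fin_cases k <;>
      simp [Γ, Fin.sum_univ_two, pd0_Tc0, pd1_Tc0, pd0_Tc1, pd1_Tc1,
        pd_const, pd0_E, pd1_E, T, -Prod.forall, -Prod.exists] <;>
      simp [E, T] <;> ring
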